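/- Let H be a normed vector space, M : H → H a continuous linear operator, and Π : H → H a linear operator with ‖Πψ‖ ≤ ‖ψ‖ for all ψ. Let φ, φ' ∈ H be unit vectors and ρ, ρ' ≥ 0 real numbers with Mφ = ρφ and Π(Mφ') = ρ'φ'. Then |ρ' − ρ| ≤ ‖M‖·‖φ' − φ‖ + ρ·‖Πφ − φ‖. (Step 2 of the proof of Lemma B.2 (lem:bias): perturbation bound for the projected Perron-Frobenius eigenvalue in terms of the eigenfunction error and projection bias.) -/

import Mathlib

/-- Step 2 of the proof of Lemma B.2 (lem:bias): perturbation bound for the projected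
Perron-Frobenius eigenvalue.  If `Mφ = ρφ`, `Π(Mφ') = ρ'φ'` with `φ, φ'` unit vectors,
`ρ, ρ' ≥ 0`, and `Π` a linear contraction, then
`|ρ' − ρ| ≤ ‖M‖‖φ' − φ‖ + ρ‖Πφ − φ‖`. -/
theorem stmt_16 {H : Type*} [NormedAddCommGroup H] [NormedSpace ℝ H]
    (M : H →L[ℝ] H) (P : H →ₗ[ℝ] H) (hP : ∀ ψ : H, ‖P ψ‖ ≤ ‖ψ‖)
    (φ φ' : H) (hφ : ‖φ‖ = 1) (hφ' : ‖φ'‖ = 1)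
    (ρ ρ' : ℝ) (hρ : 0 ≤ ρ) (hρ' : 0 ≤ ρ')
    (heig : M φ = ρ • φ) (heig' : P (M φ') = ρ' • φ') :
    |ρ' - ρ| ≤ ‖M‖ * ‖φ' - φ‖ + ρ * ‖P φ - φ‖ := by
  have h1 : |ρ' - ρ| ≤ ‖ρ' • φ' - ρ • φ‖ := by
    have := abs_norm_sub_norm_le (ρ' • φ') (ρ • φ)
    rwa [norm_smul, norm_smul, hφ, hφ', mul_one, mul_one,
      Real.norm_eq_abs, Real.norm_eq_abs, abs_of_nonneg hρ', abs_of_nonneg hρ] at this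
  refine h1.trans ?_
  have key : ρ' • φ' - ρ • φ = P (M (φ' - φ)) + (ρ • (P φ - φ)) := by
    simp [map_sub, heig', heig, map_smul, smul_sub]
  rw [key]
  calc ‖P (M (φ' - φ)) + ρ • (P φ - φ)‖
      ≤ ‖P (M (φ' - φ))‖ + ‖ρ • (P φ - φ)‖ := norm_add_le _ _
    _ ≤ ‖M (φ' - φ)‖ + ρ * ‖P φ - φ‖ := by
        rw [norm_smul, Real.norm_eq_abs, abs_of_nonneg hρ]
        exact add_le_add_left (hP _) _
    _ ≤ ‖M‖ * ‖φ' - φ‖ + ρ * ‖P φ - φ‖ :=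
        add_le_add_left (M.le_opNorm _) _
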